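/- Let Ψ be the nilpotent adjacency matrix of a simple graph G on m vertices and k a positive integer. Then for each vertex i, the (i,i) entry of Ψ^k equals Σ_{I ⊆ V, |I| = k} ω_I ζ_I, where ω_I is the number of k-cycles in G based at v_i on vertex set I. -/

import Mathlib

open scoped BigOperators

noncomputable section

/-- The ideal of squares of generators in the polynomial ring. -/
def zeonIdeal (n : ℕ) : Ideal (MvPolynomial (Fin n) ℂ) :=
  Ideal.span {p : MvPolynomial (Fin n) ℂ | ∃ i : Fin n, p = MvPolynomial.X i ^ 2}

/-- The `n`-particle complex zeon algebra. -/
abbrev Zeon (n : ℕ) := MvPolynomial (Fin n) ℂ ⧸ zeonIdeal n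

/-- The zeon generators. -/
def zeta (n : ℕ) (i : Fin n) : Zeon n := Ideal.Quotient.mk _ (MvPolynomial.X i)

/-- Basis blades. -/
def zetaBlade (n : ℕ) (I : Finset (Fin n)) : Zeon n := ∏ i ∈ I, zeta n i

/-- Scalar part map. -/
def scalarPart (n : ℕ) : Zeon n →+* ℂ :=
  Ideal.Quotient.lift _ (MvPolynomial.aeval (fun _ : Fin n => (0:ℂ))).toRingHom
    (fun a ha => by
      have h : zeonIdeal n ≤
          RingHom.ker (MvPolynomial.aeval (fun _ : Fin n => (0:ℂ))).toRingHom := by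
        rw [zeonIdeal, Ideal.span_le]
        rintro p ⟨i, rfl⟩
        simp [RingHom.mem_ker]
      exact h ha)

/-- Dual (nilpotent) part. -/
def dualPart (n : ℕ) (u : Zeon n) : Zeon n := u - algebraMap ℂ (Zeon n) (scalarPart n u)

/-- Conjugation on zeons: conjugate the complex coefficients, fix the generators. -/
def zconj (n : ℕ) : Zeon n →+* Zeon n :=
  Ideal.Quotient.lift _
    ((Ideal.Quotient.mk (zeonIdeal n)).comp (MvPolynomial.map (starRingEnd ℂ)))
    (fun a ha => by
      have h : zeonIdeal n ≤ RingHom.ker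
          ((Ideal.Quotient.mk (zeonIdeal n)).comp (MvPolynomial.map (starRingEnd ℂ))) := by
        rw [zeonIdeal, Ideal.span_le]
        rintro p ⟨i, rfl⟩
        simp only [Set.mem_setOf_eq, SetLike.mem_coe, RingHom.mem_ker, RingHom.comp_apply,
          map_pow, MvPolynomial.map_X]
        rw [← map_pow, Ideal.Quotient.eq_zero_iff_mem]
        exact Ideal.subset_span ⟨i, rfl⟩
      exact h ha)

end

noncomputable section

/-- Nilpotent adjacency matrix of a simple graph. -/
def nilAdj {m : ℕ} (G : SimpleGraph (Fin m)) [DecidableRel G.Adj] :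
    Matrix (Fin m) (Fin m) (Zeon m) :=
  fun i j => if G.Adj i j then zeta m j else 0

/-- Conjugate transpose of the nilpotent adjacency matrix. -/
def nilAdjDag {m : ℕ} (G : SimpleGraph (Fin m)) [DecidableRel G.Adj] :
    Matrix (Fin m) (Fin m) (Zeon m) :=
  fun i j => zconj m (nilAdj G j i)

/-- The zeon combinatorial Laplacian. -/
def zeonLaplacian {m : ℕ} (G : SimpleGraph (Fin m)) [DecidableRel G.Adj] :
    Matrix (Fin m) (Fin m) (Zeon m) :=
  Matrix.diagonal (fun i => (G.degree i : Zeon m)) - nilAdj G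

/-- Number of `k`-cycles based at `i` whose vertex set is `I`: closed walks
`c 0 = i, c 1, ..., c k = i` whose first `k` vertices are pairwise distinct and
have image exactly `I`. -/
def numCycles {m : ℕ} (G : SimpleGraph (Fin m)) [DecidableRel G.Adj]
    (i : Fin m) (k : ℕ) (I : Finset (Fin m)) : ℕ :=
  (Finset.univ.filter (fun c : Fin (k + 1) → Fin m =>
    c 0 = i ∧ c (Fin.last k) = i ∧
    (∀ j : Fin k, G.Adj (c j.castSucc) (c j.succ)) ∧
    (∀ a b : Fin k, c a.castSucc = c b.castSucc → a = b) ∧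
    Finset.image (fun j : Fin k => c j.castSucc) Finset.univ = I)).card

end
-- auxiliary lemmas to insert before the theorem
noncomputable section

lemma zeta_mul_self (n : ℕ) (i : Fin n) : zeta n i * zeta n i = 0 := by
  rw [zeta, ← map_mul, ← sq, Ideal.Quotient.eq_zero_iff_mem]
  exact Ideal.subset_span ⟨i, rfl⟩

lemma prod_zeta_eq (n k : ℕ) (f : Fin k → Fin n) :
    (∏ t, zeta n (f t)) =
      if Function.Injective f then zetaBlade n (Finset.image f Finset.univ) else 0 := by
  classical
  split_ifs with h
  · rw [zetaBlade, Finset.prod_image (fun a _ b _ hab => h hab)]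
  · rw [Function.not_injective_iff] at h
    obtain ⟨a, b, hab, hne⟩ := h
    rw [← Finset.mul_prod_erase Finset.univ _ (Finset.mem_univ a),
        ← Finset.mul_prod_erase _ _ (Finset.mem_erase.mpr ⟨hne.symm, Finset.mem_univ b⟩),
        ← mul_assoc, hab, zeta_mul_self, zero_mul]

lemma matrix_pow_apply {R : Type*} [CommSemiring R] {m : ℕ}
    (M : Matrix (Fin m) (Fin m) R) (k : ℕ) (i j : Fin m) :
    (M ^ k) i j = ∑ c ∈ Finset.univ.filter
        (fun c : Fin (k + 1) → Fin m => c 0 = i ∧ c (Fin.last k) = j),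
      ∏ t : Fin k, M (c t.castSucc) (c t.succ) := by
  classical
  induction k generalizing j with
  | zero =>
    rw [pow_zero, Matrix.one_apply, Finset.sum_filter]
    rw [← Fintype.sum_equiv ((Equiv.funUnique (Fin 1) (Fin m)).symm)
      (fun x : Fin m => if x = i ∧ x = j then (1 : R) else 0) _ (fun x => by
        simp [Equiv.funUnique, Fin.last, eq_comm])]
    by_cases hij : i = j
    · simp [hij]
    · rw [if_neg hij]
      refine (Finset.sum_eq_zero fun x _ => ?_).symm
      rw [if_neg (fun h => hij (h.1.symm.trans h.2))]
  | succ k ih =>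
    rw [pow_succ, Matrix.mul_apply]
    have h1 : ∀ x : Fin m, (M ^ k) i x * M x j
        = ∑ c ∈ Finset.univ.filter
            (fun c : Fin (k + 1) → Fin m => c 0 = i ∧ c (Fin.last k) = x),
            (∏ t : Fin k, M (c t.castSucc) (c t.succ)) * M (c (Fin.last k)) j := by
      intro x
      rw [ih x, Finset.sum_mul]
      refine Finset.sum_congr rfl fun c hc => ?_
      rw [(Finset.mem_filter.mp hc).2.2]
    simp only [h1]
    have h2 : ∀ x : Fin m,
        Finset.univ.filter (fun c : Fin (k + 1) → Fin m => c 0 = i ∧ c (Fin.last k) = x)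
        = (Finset.univ.filter (fun c : Fin (k + 1) → Fin m => c 0 = i)).filter
            (fun c => c (Fin.last k) = x) := by
      intro x; rw [Finset.filter_filter]
    simp only [h2]
    rw [Finset.sum_fiberwise]
    refine Finset.sum_nbij' (fun c => Fin.snoc c j) (fun c => c ∘ Fin.castSucc)
      ?_ ?_ ?_ ?_ ?_
    · intro c hc
      simp only [Finset.mem_filter] at hc ⊢
      refine ⟨Finset.mem_univ _, ?_, ?_⟩
      · rw [show (0 : Fin (k + 2)) = Fin.castSucc 0 from (Fin.castSucc_zero).symm,
          Fin.snoc_castSucc]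
        exact hc.2
      · exact Fin.snoc_last _ _
    · intro c hc
      simp only [Finset.mem_filter] at hc ⊢
      refine ⟨Finset.mem_univ _, ?_⟩
      dsimp only [Function.comp]
      rw [Fin.castSucc_zero]; exact hc.2.1
    · intro c hc
      funext t
      dsimp only [Function.comp]
      rw [Fin.snoc_castSucc]
    · intro c hc
      simp only [Finset.mem_filter] at hc
      funext t
      refine Fin.lastCases ?_ (fun s => ?_) t
      · rw [Fin.snoc_last]; exact hc.2.2.symm
      · rw [Fin.snoc_castSucc]; rfl
    · intro c hc
      simp only [Fin.prod_univ_castSucc, Fin.succ_castSucc, Fin.snoc_castSucc,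
        Fin.succ_last, Fin.snoc_last]

lemma succ_comp_rotate {m k : ℕ} (c : Fin (k + 2) → Fin m)
    (h : c (Fin.last (k + 1)) = c 0) :
    (fun t : Fin (k + 1) => c t.succ)
      = (fun t : Fin (k + 1) => c t.castSucc) ∘ (finRotate (k + 1)) := by
  funext t
  simp only [Function.comp_apply, finRotate_succ_apply]
  rcases eq_or_ne t (Fin.last k) with h1 | h1
  · subst h1
    rw [Fin.succ_last, h, Fin.last_add_one, Fin.castSucc_zero]
  · congr 1
    apply Fin.ext
    simp [Fin.val_add_one, h1]

lemma cycle_shift_inj {m k : ℕ} (c : Fin (k + 2) → Fin m)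
    (h : c (Fin.last (k + 1)) = c 0) :
    Function.Injective (fun t : Fin (k + 1) => c t.succ) ↔
      Function.Injective (fun t : Fin (k + 1) => c t.castSucc) := by
  rw [succ_comp_rotate c h]
  exact Equiv.injective_comp _ _

lemma cycle_shift_image {m k : ℕ} (c : Fin (k + 2) → Fin m)
    (h : c (Fin.last (k + 1)) = c 0) :
    Finset.image (fun t : Fin (k + 1) => c t.succ) Finset.univ
      = Finset.image (fun t : Fin (k + 1) => c t.castSucc) Finset.univ := by
  rw [succ_comp_rotate c h, ← Finset.image_image, Finset.image_univ_equiv]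

end

/-- the `(i,i)` entry of `Ψ^k` enumerates the `k`-cycles based
at `vᵢ`, organized by their vertex sets. -/
theorem nilAdj_pow_diag (m : ℕ) (G : SimpleGraph (Fin m)) [DecidableRel G.Adj]
    (i : Fin m) (k : ℕ) (hk : 0 < k) :
    (nilAdj G ^ k) i i =
      ∑ I ∈ Finset.univ.filter (fun I : Finset (Fin m) => I.card = k),
        (numCycles G i k I : Zeon m) * zetaBlade m I := by
  classical
  obtain ⟨k', rfl⟩ : ∃ k', k = k' + 1 := ⟨k - 1, (Nat.succ_pred_eq_of_pos hk).symm⟩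
  rw [matrix_pow_apply]
  have hterm : ∀ c : Fin (k' + 2) → Fin m,
      (∏ t : Fin (k' + 1), nilAdj G (c t.castSucc) (c t.succ))
      = if (∀ t : Fin (k' + 1), G.Adj (c t.castSucc) (c t.succ)) ∧
            Function.Injective (fun t : Fin (k' + 1) => c t.succ)
        then zetaBlade m (Finset.image (fun t : Fin (k' + 1) => c t.succ) Finset.univ)
        else 0 := by
    intro c
    simp only [nilAdj]
    rw [Fintype.prod_ite_zero, prod_zeta_eq m (k' + 1) (fun t => c t.succ)]
    by_cases h1 : ∀ t : Fin (k' + 1), G.Adj (c t.castSucc) (c t.succ) <;>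
      by_cases h2 : Function.Injective (fun t : Fin (k' + 1) => c t.succ) <;>
      simp [h1, h2]
  simp only [hterm]
  rw [← Finset.sum_filter, Finset.filter_filter]
  have hR : ∀ I : Finset (Fin m),
      (numCycles G i (k' + 1) I : Zeon m) * zetaBlade m I
      = ∑ _c ∈ Finset.univ.filter (fun c : Fin (k' + 2) → Fin m =>
          c 0 = i ∧ c (Fin.last (k' + 1)) = i ∧
          (∀ j : Fin (k' + 1), G.Adj (c j.castSucc) (c j.succ)) ∧
          (∀ a b : Fin (k' + 1), c a.castSucc = c b.castSucc → a = b) ∧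
          Finset.image (fun j : Fin (k' + 1) => c j.castSucc) Finset.univ = I),
          zetaBlade m I := by
    intro I
    rw [numCycles, Finset.sum_const, nsmul_eq_mul]
  simp only [hR]
  have hsplit : ∀ I : Finset (Fin m),
      Finset.univ.filter (fun c : Fin (k' + 2) → Fin m =>
          c 0 = i ∧ c (Fin.last (k' + 1)) = i ∧
          (∀ j : Fin (k' + 1), G.Adj (c j.castSucc) (c j.succ)) ∧
          (∀ a b : Fin (k' + 1), c a.castSucc = c b.castSucc → a = b) ∧
          Finset.image (fun j : Fin (k' + 1) => c j.castSucc) Finset.univ = I)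
      = (Finset.univ.filter (fun c : Fin (k' + 2) → Fin m =>
          c 0 = i ∧ c (Fin.last (k' + 1)) = i ∧
          (∀ j : Fin (k' + 1), G.Adj (c j.castSucc) (c j.succ)) ∧
          (∀ a b : Fin (k' + 1), c a.castSucc = c b.castSucc → a = b))).filter
          (fun c => Finset.image (fun j : Fin (k' + 1) => c j.castSucc) Finset.univ = I) := by
    intro I
    rw [Finset.filter_filter]
    exact Finset.filter_congr (fun c _ => by tauto)
  simp only [hsplit]
  have hfib :
      ∑ I ∈ Finset.univ.filter (fun I : Finset (Fin m) => I.card = k' + 1),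
        ∑ c ∈ (Finset.univ.filter (fun c : Fin (k' + 2) → Fin m =>
          c 0 = i ∧ c (Fin.last (k' + 1)) = i ∧
          (∀ j : Fin (k' + 1), G.Adj (c j.castSucc) (c j.succ)) ∧
          (∀ a b : Fin (k' + 1), c a.castSucc = c b.castSucc → a = b))).filter
          (fun c => Finset.image (fun j : Fin (k' + 1) => c j.castSucc) Finset.univ = I),
          zetaBlade m I
      = ∑ c ∈ Finset.univ.filter (fun c : Fin (k' + 2) → Fin m =>
          c 0 = i ∧ c (Fin.last (k' + 1)) = i ∧
          (∀ j : Fin (k' + 1), G.Adj (c j.castSucc) (c j.succ)) ∧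
          (∀ a b : Fin (k' + 1), c a.castSucc = c b.castSucc → a = b)),
          zetaBlade m (Finset.image (fun j : Fin (k' + 1) => c j.castSucc) Finset.univ) := by
    have step : ∀ I ∈ Finset.univ.filter (fun I : Finset (Fin m) => I.card = k' + 1),
        (∑ _c ∈ (Finset.univ.filter (fun c : Fin (k' + 2) → Fin m =>
          c 0 = i ∧ c (Fin.last (k' + 1)) = i ∧
          (∀ j : Fin (k' + 1), G.Adj (c j.castSucc) (c j.succ)) ∧
          (∀ a b : Fin (k' + 1), c a.castSucc = c b.castSucc → a = b))).filter
          (fun c => Finset.image (fun j : Fin (k' + 1) => c j.castSucc) Finset.univ = I),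
          zetaBlade m I)
        = ∑ c ∈ (Finset.univ.filter (fun c : Fin (k' + 2) → Fin m =>
          c 0 = i ∧ c (Fin.last (k' + 1)) = i ∧
          (∀ j : Fin (k' + 1), G.Adj (c j.castSucc) (c j.succ)) ∧
          (∀ a b : Fin (k' + 1), c a.castSucc = c b.castSucc → a = b))).filter
          (fun c => Finset.image (fun j : Fin (k' + 1) => c j.castSucc) Finset.univ = I),
          zetaBlade m (Finset.image (fun j : Fin (k' + 1) => c j.castSucc) Finset.univ) :=
      fun I _ => Finset.sum_congr rfl (fun c hc => by rw [(Finset.mem_filter.mp hc).2])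
    rw [Finset.sum_congr rfl step]
    refine Finset.sum_fiberwise_of_maps_to (fun c hc => ?_) _
    rw [Finset.mem_filter]
    refine ⟨Finset.mem_univ _, ?_⟩
    rw [Finset.card_image_of_injective _ ((Finset.mem_filter.mp hc).2.2.2.2 :
      Function.Injective (fun j : Fin (k' + 1) => c j.castSucc))]
    simp
  rw [hfib]
  refine Finset.sum_congr ?_ (fun c hc => ?_)
  · refine Finset.filter_congr (fun c _ => ?_)
    constructor
    · rintro ⟨⟨h0, hl⟩, hadj, hinj⟩
      exact ⟨h0, hl, hadj, (cycle_shift_inj c (hl.trans h0.symm)).mp hinj⟩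
    · rintro ⟨h0, hl, hadj, hinj⟩
      exact ⟨⟨h0, hl⟩, hadj, (cycle_shift_inj c (hl.trans h0.symm)).mpr hinj⟩
  · obtain ⟨-, h0, hl, -⟩ := Finset.mem_filter.mp hc
    rw [cycle_shift_image c (hl.trans h0.symm)]
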